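/- Let y_1, …, y_n be n ≥ 2 points in R^2 with minimum pairwise distance d_min, let Δ = π/(n(n+1)), and consider the n(n+1)/2 unit vectors v_q = (cos(2qΔ), sin(2qΔ)) for q = 1, …, n(n+1)/2. Then there exists an index q* such that for all p ≠ j, ||P_{v_{q*}^⊥}(y_p) − P_{v_{q*}^⊥}(y_j)||_2 ≥ 2 d_min/(n(n+1)). -/

import Mathlib

open Real

/-- Orthogonal projection of `u` onto the orthogonal complement of the span of `v`
(for a unit vector `v`): `P_{v^⊥}(u) = u − (u·v) v`. -/
noncomputable def projPerp {E : Type*} [NormedAddCommGroup E] [InnerProductSpace ℝ E]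
    (v u : E) : E := u - (inner ℝ u v : ℝ) • v

/-- The unit vector `(cos α, sin α)` in `ℝ²`. -/
noncomputable def dirVec (α : ℝ) : EuclideanSpace ℝ (Fin 2) :=
  (WithLp.equiv 2 (Fin 2 → ℝ)).symm ![Real.cos α, Real.sin α]

lemma norm_dirVec (α : ℝ) : ‖dirVec α‖ = 1 := by
  rw [EuclideanSpace.norm_eq]
  simp only [dirVec, WithLp.equiv_symm_apply, PiLp.toLp_apply, Fin.sum_univ_two, Matrix.cons_val_zero,
    Matrix.cons_val_one, Matrix.head_cons, Real.norm_eq_abs, sq_abs]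
  rw [Real.cos_sq_add_sin_sq, Real.sqrt_one]

lemma inner_dirVec (u : EuclideanSpace ℝ (Fin 2)) (α : ℝ) :
    (inner ℝ u (dirVec α) : ℝ) = u 0 * Real.cos α + u 1 * Real.sin α := by
  simp [dirVec, PiLp.inner_apply, Fin.sum_univ_two, RCLike.inner_apply]
  try ring

lemma projPerp_sub {E : Type*} [NormedAddCommGroup E] [InnerProductSpace ℝ E]
    (v a b : E) : projPerp v a - projPerp v b = projPerp v (a - b) := by
  simp only [projPerp, inner_sub_left, sub_smul]
  abel

lemma norm_projPerp (u : EuclideanSpace ℝ (Fin 2)) (α : ℝ) (hu : u ≠ 0) :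
    ‖projPerp (dirVec α) u‖
      = ‖u‖ * |Real.sin (Complex.arg (⟨u 0, u 1⟩ : ℂ) - α)| := by
  set z : ℂ := ⟨u 0, u 1⟩ with hzdef
  have hz : z ≠ 0 := by
    intro h
    apply hu
    have h0 : u 0 = 0 := congrArg Complex.re h
    have h1 : u 1 = 0 := congrArg Complex.im h
    ext i
    fin_cases i <;> simpa
  have habs : ‖z‖ = ‖u‖ := by
    rw [EuclideanSpace.norm_eq, Complex.norm_def, Complex.normSq_apply]
    simp [Fin.sum_univ_two, sq_abs]
    ring_nf
    rfl
  have habs0 : ‖z‖ ≠ 0 := by simpa using hz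
  have hcos : u 0 = ‖u‖ * Real.cos z.arg := by
    rw [Complex.cos_arg hz, ← habs]
    field_simp
    rfl
  have hsin : u 1 = ‖u‖ * Real.sin z.arg := by
    rw [Complex.sin_arg, ← habs]
    field_simp
    rfl
  have hinner : (inner ℝ u (dirVec α) : ℝ) = ‖u‖ * Real.cos (z.arg - α) := by
    rw [inner_dirVec, Real.cos_sub, hcos, hsin]
    ring
  have hsq : ‖projPerp (dirVec α) u‖ ^ 2
      = (‖u‖ * |Real.sin (z.arg - α)|) ^ 2 := by
    unfold projPerp
    rw [norm_sub_sq_real, real_inner_smul_right, hinner, norm_smul, norm_dirVec,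
      Real.norm_eq_abs]
    have hpyth := Real.sin_sq_add_cos_sq (z.arg - α)
    rw [mul_pow, mul_pow, sq_abs, sq_abs]
    nlinarith [hpyth]
  exact (sq_eq_sq₀ (norm_nonneg _) (by positivity)).mp hsq

lemma near_pi_multiple {x Δ : ℝ} (hΔ : 0 < Δ) (hΔ2 : Δ ≤ π / 2)
    (h : |Real.sin x| < Real.sin Δ) : ∃ k : ℤ, |x - k * π| < Δ := by
  refine ⟨round (x / π), ?_⟩
  set k : ℤ := round (x / π) with hk
  set r : ℝ := x - k * π with hrdef
  have hπ : (0:ℝ) < π := Real.pi_pos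
  have hr2 : |r| ≤ π / 2 := by
    have h1 : |x / π - k| ≤ 1 / 2 := abs_sub_round (x / π)
    have hq : x / π - k = r / π := by
      rw [hrdef]; field_simp
    rw [hq, abs_div, abs_of_pos hπ, div_le_iff₀ hπ] at h1
    linarith
  have hrr := abs_le.mp hr2
  have hx : x = k * π + r := by rw [hrdef]; ring
  have hsin : |Real.sin x| = |Real.sin r| := by
    rw [hx, Real.sin_add, Real.sin_int_mul_pi, zero_mul, zero_add, abs_mul,
      Real.abs_cos_int_mul_pi, one_mul]
  by_contra h'
  push_neg at h'
  have habs : |Real.sin r| = Real.sin |r| := by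
    rcases le_or_gt 0 r with hr | hr
    · rw [abs_of_nonneg hr,
        abs_of_nonneg (Real.sin_nonneg_of_nonneg_of_le_pi hr (by linarith))]
    · calc |Real.sin r| = |Real.sin (-r)| := by rw [Real.sin_neg, abs_neg]
        _ = Real.sin (-r) :=
          abs_of_nonneg (Real.sin_nonneg_of_nonneg_of_le_pi (by linarith) (by linarith))
        _ = Real.sin |r| := by rw [abs_of_neg hr]
  have hmono : Real.sin Δ ≤ Real.sin |r| :=
    Real.sin_le_sin_of_le_of_le_pi_div_two (by linarith) hr2 h'
  rw [hsin, habs] at h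
  linarith

lemma bad_unique {N : ℕ} {Δ φ : ℝ} (hΔ : 0 < Δ) (hπ : π = 2 * N * Δ)
    {q1 q2 : ℕ} (hq1 : 1 ≤ q1) (hq1' : q1 ≤ N) (hq2 : 1 ≤ q2) (hq2' : q2 ≤ N)
    {k1 k2 : ℤ} (e1 : |φ - 2 * q1 * Δ - k1 * π| < Δ) (e2 : |φ - 2 * q2 * Δ - k2 * π| < Δ) :
    q1 = q2 := by
  set M : ℤ := ((q2 : ℤ) - q1) + (k2 - k1) * N with hM
  have hdiff : (φ - 2 * q1 * Δ - k1 * π) - (φ - 2 * q2 * Δ - k2 * π) = 2 * Δ * M := by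
    rw [hM, hπ]
    push_cast
    ring
  have h1 : |(2 * Δ) * (M:ℝ)| < 2 * Δ := by
    rw [← hdiff]
    calc |(φ - 2 * q1 * Δ - k1 * π) - (φ - 2 * q2 * Δ - k2 * π)|
        ≤ |φ - 2 * q1 * Δ - k1 * π| + |φ - 2 * q2 * Δ - k2 * π| := abs_sub _ _
      _ < 2 * Δ := by linarith
  have h2 : |(M:ℝ)| < 1 := by
    rw [abs_mul, abs_of_pos (by linarith : (0:ℝ) < 2 * Δ)] at h1
    nlinarith [abs_nonneg ((M:ℝ))]
  have hM0 : M = 0 := by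
    have h3 : ((|M| : ℤ) : ℝ) < 1 := by rw [Int.cast_abs]; exact h2
    have h4 : |M| < 1 := by exact_mod_cast h3
    exact Int.abs_lt_one_iff.mp h4
  have h0 : ((q2 : ℤ) - q1) + (k2 - k1) * N = 0 := by rw [← hM]; exact hM0
  have heq : (q2 : ℤ) - q1 = (k1 - k2) * N := by linear_combination h0
  rcases eq_or_ne k1 k2 with hk | hk
  · subst hk
    have : (q2 : ℤ) - q1 = 0 := by rw [heq]; ring
    omega
  · exfalso
    have h5 : (N : ℤ) ≤ |(k1 - k2) * N| := by
      calc (N : ℤ) = 1 * |(N:ℤ)| := by simp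
        _ ≤ |k1 - k2| * |(N:ℤ)| :=
            mul_le_mul_of_nonneg_right (Int.one_le_abs (sub_ne_zero.mpr hk)) (abs_nonneg _)
        _ = |(k1 - k2) * N| := (abs_mul _ _).symm
    have h6 : |(q2 : ℤ) - (q1 : ℤ)| < (N : ℤ) := by rw [abs_lt]; omega
    rw [heq] at h6
    linarith

/-- For `n ≥ 2` points in `ℝ²` with minimum pairwise distance `d_min > 0`, with
`Δ = π/(n(n+1))` and the unit vectors `v_q = (cos 2qΔ, sin 2qΔ)`, `q = 1, …, n(n+1)/2`,
there exists `q*` such that all projected pairwise distances onto `v_{q*}^⊥` are at least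
`2 d_min/(n(n+1))`. -/
theorem exists_good_direction_two_dim (n : ℕ) (hn : 2 ≤ n)
    (y : Fin n → EuclideanSpace ℝ (Fin 2)) (dmin : ℝ) (hdmin : 0 < dmin)
    (hsep : ∀ p j, p ≠ j → dmin ≤ ‖y p - y j‖) :
    ∃ q : ℕ, 1 ≤ q ∧ q ≤ n * (n + 1) / 2 ∧
      ∀ p j, p ≠ j →
        2 * dmin / ((n : ℝ) * ((n : ℝ) + 1)) ≤
          ‖projPerp (dirVec (2 * (q : ℝ) * (Real.pi / ((n : ℝ) * ((n : ℝ) + 1))))) (y p) -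
            projPerp (dirVec (2 * (q : ℝ) * (Real.pi / ((n : ℝ) * ((n : ℝ) + 1))))) (y j)‖ := by
  classical
  have hn2 : (2:ℝ) ≤ (n:ℝ) := by exact_mod_cast hn
  set m : ℝ := (n : ℝ) * ((n : ℝ) + 1) with hm
  have hm_pos : 0 < m := by rw [hm]; nlinarith
  set Δ : ℝ := π / m with hΔdef
  have hπpos : (0:ℝ) < π := Real.pi_pos
  have hΔpos : 0 < Δ := by rw [hΔdef]; positivity
  have hΔle : Δ ≤ π / 2 := by
    rw [hΔdef]
    apply div_le_div_of_nonneg_left hπpos.le two_pos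
    nlinarith
  set N : ℕ := n * (n + 1) / 2 with hNdef
  have hNN : 2 * N = n * (n + 1) := by
    have h := Nat.div_mul_cancel ((Nat.even_mul_succ_self n).two_dvd)
    omega
  have hmN : 2 * (N : ℝ) = m := by
    have : ((2 * N : ℕ) : ℝ) = ((n * (n + 1) : ℕ) : ℝ) := by rw [hNN]
    push_cast at this
    rw [hm]; linarith
  have hπm : π = 2 * (N : ℝ) * Δ := by
    rw [hΔdef, hmN]
    field_simp
  -- the angle of each difference vector
  set φ : Fin n → Fin n → ℝ :=
    fun p j => Complex.arg (⟨(y p - y j) 0, (y p - y j) 1⟩ : ℂ) with hφ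
  have hne : ∀ p j : Fin n, p ≠ j → y p - y j ≠ 0 := by
    intro p j hpj h
    have := hsep p j hpj
    rw [h, norm_zero] at this
    linarith
  have hkey : ∀ (p j : Fin n), p ≠ j → ∀ α : ℝ,
      ‖projPerp (dirVec α) (y p) - projPerp (dirVec α) (y j)‖
        = ‖y p - y j‖ * |Real.sin (φ p j - α)| := by
    intro p j hpj α
    rw [projPerp_sub, hφ]
    exact norm_projPerp _ _ (hne p j hpj)
  -- the set of (ordered, increasing) pairs
  set T : Finset (Fin n × Fin n) := Finset.univ.filter (fun a => a.1 < a.2) with hT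
  have hTcard : T.card * 2 = n * (n - 1) := by
    have h1 : T.card = ∑ b : Fin n, (b : ℕ) := by
      rw [hT, Finset.card_filter, ← Finset.univ_product_univ, Finset.sum_product,
        Finset.sum_comm]
      refine Finset.sum_congr rfl fun b _ => ?_
      simp only []
      rw [← Finset.card_filter,
        show Finset.univ.filter (fun a : Fin n => a < b) = Finset.Iio b from by ext a; simp,
        Fin.card_Iio]
    rw [h1, Fin.sum_univ_eq_sum_range (fun i => i) n]
    exact Finset.sum_range_id_mul_two n
  have hTN : T.card < N := by
    have h1 : n * (n - 1) < n * (n + 1) :=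
      mul_lt_mul_of_pos_left (show n - 1 < n + 1 by omega) (by omega)
    have h2 : T.card * 2 < 2 * N := by rw [hTcard, hNN]; exact h1
    omega
  -- the bad directions
  set P : ℕ → Prop :=
    fun q => ∃ a ∈ T, |Real.sin (φ a.1 a.2 - 2 * (q:ℝ) * Δ)| < Real.sin Δ with hP
  set badQ : Finset ℕ := (Finset.Icc 1 N).filter P with hbadQ
  have hd : Fin n := ⟨0, by omega⟩
  set g : ℕ → Fin n × Fin n := fun q => if h : P q then h.choose else (hd, hd) with hg
  have hgT : ∀ q ∈ badQ, g q ∈ T := by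
    intro q hq
    rw [hbadQ, Finset.mem_filter] at hq
    rw [hg]
    simp only [dif_pos hq.2]
    exact hq.2.choose_spec.1
  have hginj : Set.InjOn g badQ := by
    intro q1 h1 q2 h2 heq
    rw [Finset.mem_coe, hbadQ, Finset.mem_filter, Finset.mem_Icc] at h1 h2
    obtain ⟨⟨hq11, hq12⟩, hb1⟩ := h1
    obtain ⟨⟨hq21, hq22⟩, hb2⟩ := h2
    rw [hg] at heq
    simp only [dif_pos hb1, dif_pos hb2] at heq
    have hs1 := hb1.choose_spec.2
    have hs2 := hb2.choose_spec.2
    rw [heq] at hs1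
    set a := hb2.choose with ha
    obtain ⟨k1, e1⟩ := near_pi_multiple hΔpos hΔle hs1
    obtain ⟨k2, e2⟩ := near_pi_multiple hΔpos hΔle hs2
    exact bad_unique hΔpos hπm hq11 hq12 hq21 hq22 e1 e2
  have hbcard : badQ.card < N := lt_of_le_of_lt (Finset.card_le_card_of_injOn g hgT hginj) hTN
  have hnsub : ¬ (Finset.Icc 1 N ⊆ badQ) := by
    intro hsub
    have := Finset.card_le_card hsub
    rw [Nat.card_Icc] at this
    omega
  obtain ⟨q, hqI, hqnb⟩ := Finset.not_subset.mp hnsub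
  rw [Finset.mem_Icc] at hqI
  refine ⟨q, hqI.1, hqI.2, ?_⟩
  have hnb : ¬ P q := fun hb =>
    hqnb (by rw [hbadQ, Finset.mem_filter]; exact ⟨Finset.mem_Icc.mpr hqI, hb⟩)
  have hgood : ∀ a ∈ T, Real.sin Δ ≤ |Real.sin (φ a.1 a.2 - 2 * (q:ℝ) * Δ)| := by
    intro a ha
    by_contra hlt
    push_neg at hlt
    refine hnb ?_
    rw [hP]
    exact ⟨a, ha, hlt⟩
  have hsinΔpos : 0 ≤ Real.sin Δ :=
    Real.sin_nonneg_of_nonneg_of_le_pi hΔpos.le (by linarith)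
  have hjordan : 2 / π * Δ ≤ Real.sin Δ := Real.mul_le_sin hΔpos.le hΔle
  have hmain : ∀ (p j : Fin n), p < j →
      2 * dmin / m ≤ ‖y p - y j‖ * |Real.sin (φ p j - 2 * (q:ℝ) * Δ)| := by
    intro p j hpj
    have hmem : (p, j) ∈ T := by rw [hT, Finset.mem_filter]; exact ⟨Finset.mem_univ _, hpj⟩
    have hb := hgood (p, j) hmem
    calc 2 * dmin / m = dmin * (2 / π * Δ) := by
          rw [hΔdef]; field_simp
      _ ≤ dmin * Real.sin Δ := mul_le_mul_of_nonneg_left hjordan hdmin.le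
      _ ≤ ‖y p - y j‖ * |Real.sin (φ p j - 2 * (q:ℝ) * Δ)| :=
          mul_le_mul (hsep p j hpj.ne) hb hsinΔpos (norm_nonneg _)
  intro p j hpj
  rcases hpj.lt_or_gt with h | h
  · rw [hkey p j hpj]
    exact hmain p j h
  · rw [norm_sub_rev, hkey j p hpj.symm]
    exact hmain j p h
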